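/- Let Q > 0, let h : ℂ → ℝ be continuous, let ε > 0, let C = 2^k for some k ∈ ℤ be a dyadic scaling factor, and let a ∈ ℝ. Define g : ℂ → ℝ by g(w) := h(w/C) − a and set ε' := C^Q · e^{−a} · ε. Then a dyadic square S belongs to S_h^ε(ℂ) if and only if CS belongs to S_g^{ε'}(ℂ); consequently D_g^{ε'}(Cz, Cw) = D_h^ε(z,w) for all z, w ∈ ℂ. -/

import Mathlib

open MeasureTheory Real Set

noncomputable section

/-- A closed axis-parallel square in the plane (identified with `ℂ`),
given by its bottom-left corner `(x, y)` and its positive side length. -/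
structure DySquare where
  x : ℝ
  y : ℝ
  side : ℝ
  side_pos : 0 < side

namespace DySquare

/-- The closed square as a subset of `ℂ`. -/
def toSet (S : DySquare) : Set ℂ :=
  {z : ℂ | S.x ≤ z.re ∧ z.re ≤ S.x + S.side ∧ S.y ≤ z.im ∧ z.im ≤ S.y + S.side}

/-- The center `v_S` of the square. -/
def center (S : DySquare) : ℂ :=
  ⟨S.x + S.side / 2, S.y + S.side / 2⟩

/-- A square is dyadic if its side length is `2^{-n}` for some `n : ℤ`
and its corners lie in `2^{-n} ℤ²`. -/
def IsDyadic (S : DySquare) : Prop :=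
  ∃ n : ℤ, S.side = 2 ^ (-n) ∧ ∃ a b : ℤ, S.x = a * 2 ^ (-n) ∧ S.y = b * 2 ^ (-n)

end DySquare

/-- The circle average `h_r(z)` of a function `h : ℂ → ℝ`. -/
def circleAvg (h : ℂ → ℝ) (r : ℝ) (z : ℂ) : ℝ :=
  (2 * π)⁻¹ * ∫ θ in (0:ℝ)..(2 * π), h (z + (r : ℂ) * Complex.exp ((θ : ℂ) * Complex.I))

/-- `M_h(S) = exp(h_{|S|/2}(v_S)) |S|^Q`, the "LQG size" of the square `S`. -/
def Mass (h : ℂ → ℝ) (Q : ℝ) (S : DySquare) : ℝ :=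
  Real.exp (circleAvg h (S.side / 2) S.center) * S.side ^ Q

/-- The dyadic tiling `𝒮_h^ε(U)`: dyadic squares `S ⊆ U` with `M_h(S) ≤ ε` such that
every strictly larger dyadic square `S'` with `S ⊊ S' ⊆ U` satisfies `M_h(S') > ε`. -/
def Tiling (h : ℂ → ℝ) (Q ε : ℝ) (U : Set ℂ) : Set DySquare :=
  {S | S.IsDyadic ∧ S.toSet ⊆ U ∧ Mass h Q S ≤ ε ∧
    ∀ S' : DySquare, S'.IsDyadic → S.toSet ⊂ S'.toSet → S'.toSet ⊆ U → ε < Mass h Q S'}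

/-- There is a chain of `k+1` squares of `𝒮_h^ε(U)` from a square containing `z` to a
square containing `w`, consecutive squares being equal or adjacent (i.e. their
intersection contains more than one point). -/
def HasChain (h : ℂ → ℝ) (Q ε : ℝ) (U : Set ℂ) (z w : ℂ) (k : ℕ) : Prop :=
  ∃ S : ℕ → DySquare, (∀ j ≤ k, S j ∈ Tiling h Q ε U) ∧
    z ∈ (S 0).toSet ∧ w ∈ (S k).toSet ∧
    ∀ j, 1 ≤ j → j ≤ k → ((S (j - 1)).toSet ∩ (S j).toSet).Nontrivial

/-- The graph distance `D_h^ε(z, w; U)`, with value `∞` if no finite chain exists. -/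
def GDist (h : ℂ → ℝ) (Q ε : ℝ) (U : Set ℂ) (z w : ℂ) : ℕ∞ :=
  sInf {n : ℕ∞ | ∃ k : ℕ, n = (k : ℕ∞) ∧ HasChain h Q ε U z w k}


/-- Scaling a square by a positive factor `C`. -/
def DySquare.scale (C : ℝ) (hC : 0 < C) (S : DySquare) : DySquare :=
  ⟨C * S.x, C * S.y, C * S.side, mul_pos hC S.side_pos⟩

namespace ScalingAux

variable {C : ℝ}

lemma mem_scale_iff (hCpos : 0 < C) (S : DySquare) (w : ℂ) :
    (C : ℂ) * w ∈ (S.scale C hCpos).toSet ↔ w ∈ S.toSet := by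
  simp only [DySquare.toSet, DySquare.scale, Set.mem_setOf_eq, Complex.mul_re,
    Complex.mul_im, Complex.ofReal_re, Complex.ofReal_im]
  constructor <;> rintro ⟨h1, h2, h3, h4⟩ <;> refine ⟨?_, ?_, ?_, ?_⟩ <;> nlinarith

lemma scale_toSet (hCpos : 0 < C) (S : DySquare) :
    (S.scale C hCpos).toSet = (fun w => (C : ℂ) * w) '' S.toSet := by
  have hC0 : (C : ℂ) ≠ 0 := by exact_mod_cast hCpos.ne'
  ext z
  constructor
  · intro hz
    refine ⟨z / C, ?_, by field_simp⟩
    rw [← mem_scale_iff hCpos S (z / C)]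
    rwa [mul_div_cancel₀ _ hC0]
  · rintro ⟨w, hw, rfl⟩
    exact (mem_scale_iff hCpos S w).2 hw

lemma scale_scale_inv (hCpos : 0 < C) (S : DySquare) :
    (S.scale C hCpos).scale C⁻¹ (inv_pos.2 hCpos) = S := by
  cases S
  simp [DySquare.scale, inv_mul_cancel_left₀ hCpos.ne']

lemma scale_inv_scale (hCpos : 0 < C) (S : DySquare) :
    (S.scale C⁻¹ (inv_pos.2 hCpos)).scale C hCpos = S := by
  cases S
  simp [DySquare.scale, mul_inv_cancel_left₀ hCpos.ne']

lemma scale_subset_iff (hCpos : 0 < C) (S T : DySquare) :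
    (S.scale C hCpos).toSet ⊆ (T.scale C hCpos).toSet ↔ S.toSet ⊆ T.toSet := by
  have hC0 : (C : ℂ) ≠ 0 := by exact_mod_cast hCpos.ne'
  rw [scale_toSet hCpos, scale_toSet hCpos,
    Set.image_subset_image_iff (mul_right_injective₀ hC0)]

lemma scale_ssubset_iff (hCpos : 0 < C) (S T : DySquare) :
    (S.scale C hCpos).toSet ⊂ (T.scale C hCpos).toSet ↔ S.toSet ⊂ T.toSet := by
  rw [ssubset_iff_subset_not_subset, ssubset_iff_subset_not_subset,
    scale_subset_iff hCpos, scale_subset_iff hCpos]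

lemma isDyadic_scale {k : ℤ} (hCpos : 0 < C) (hC : C = 2 ^ k) {S : DySquare}
    (hS : S.IsDyadic) : (S.scale C hCpos).IsDyadic := by
  obtain ⟨n, hside, p, q, hx, hy⟩ := hS
  have h2 : (2 : ℝ) ≠ 0 := two_ne_zero
  refine ⟨n - k, ?_, p, q, ?_, ?_⟩
  · show C * S.side = _
    rw [hC, hside, ← zpow_add₀ h2]
    congr 1; ring
  · show C * S.x = _
    rw [hC, hx, show (2 : ℝ) ^ k * ((p : ℝ) * 2 ^ (-n)) = (p : ℝ) * ((2:ℝ) ^ k * 2 ^ (-n)) by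
      ring, ← zpow_add₀ h2]
    congr 2; ring
  · show C * S.y = _
    rw [hC, hy, show (2 : ℝ) ^ k * ((q : ℝ) * 2 ^ (-n)) = (q : ℝ) * ((2:ℝ) ^ k * 2 ^ (-n)) by
      ring, ← zpow_add₀ h2]
    congr 2; ring

lemma circleAvg_scale (hCpos : 0 < C) (h : ℂ → ℝ) (hcont : Continuous h) (a : ℝ)
    (r : ℝ) (z : ℂ) :
    circleAvg (fun u => h (u / (C : ℂ)) - a) (C * r) ((C : ℂ) * z)
      = circleAvg h r z - a := by
  have hC0 : (C : ℂ) ≠ 0 := by exact_mod_cast hCpos.ne'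
  unfold circleAvg
  have key : ∀ θ : ℝ,
      (fun u => h (u / (C : ℂ)) - a)
        ((C : ℂ) * z + ((C * r : ℝ) : ℂ) * Complex.exp ((θ : ℂ) * Complex.I))
      = h (z + (r : ℂ) * Complex.exp ((θ : ℂ) * Complex.I)) - a := by
    intro θ
    have : ((C : ℂ) * z + ((C * r : ℝ) : ℂ) * Complex.exp ((θ : ℂ) * Complex.I)) / (C : ℂ)
        = z + (r : ℂ) * Complex.exp ((θ : ℂ) * Complex.I) := by
      push_cast
      field_simp
    simp only [this]
  have hint : IntervalIntegrable
      (fun θ : ℝ => h (z + (r : ℂ) * Complex.exp ((θ : ℂ) * Complex.I)))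
      MeasureTheory.volume 0 (2 * π) := by
    apply Continuous.intervalIntegrable
    exact hcont.comp (by continuity)
  rw [intervalIntegral.integral_congr (g := fun θ : ℝ =>
      h (z + (r : ℂ) * Complex.exp ((θ : ℂ) * Complex.I)) - a) (fun θ _ => key θ)]
  rw [intervalIntegral.integral_sub hint intervalIntegrable_const,
    intervalIntegral.integral_const]
  have h2π : (2 * π) ≠ 0 := by positivity
  field_simp
  simp only [sub_zero, smul_eq_mul, mul_comm Complex.I]

lemma mass_scale (hCpos : 0 < C) (h : ℂ → ℝ) (hcont : Continuous h) (Q a : ℝ)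
    (S : DySquare) :
    Mass (fun u => h (u / (C : ℂ)) - a) Q (S.scale C hCpos)
      = C ^ Q * Real.exp (-a) * Mass h Q S := by
  unfold Mass
  have hcenter : (S.scale C hCpos).center = (C : ℂ) * S.center := by
    apply Complex.ext <;>
      simp [DySquare.center, DySquare.scale, Complex.mul_re, Complex.mul_im] <;> ring
  have hside : (S.scale C hCpos).side = C * S.side := rfl
  rw [hcenter, hside, show C * S.side / 2 = C * (S.side / 2) by ring,
    circleAvg_scale hCpos h hcont, sub_eq_add_neg, Real.exp_add,
    Real.mul_rpow hCpos.le S.side_pos.le]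
  ring

lemma tiling_iff {k : ℤ} (hCpos : 0 < C) (hC : C = 2 ^ k)
    (h : ℂ → ℝ) (hcont : Continuous h) (Q a ε ε' : ℝ)
    (hε' : ε' = C ^ Q * Real.exp (-a) * ε) (S : DySquare) :
    S ∈ Tiling h Q ε Set.univ ↔
      S.scale C hCpos ∈ Tiling (fun u => h (u / (C : ℂ)) - a) Q ε' Set.univ := by
  have hκ : 0 < C ^ Q * Real.exp (-a) := by positivity
  have hCinv : C⁻¹ = (2 : ℝ) ^ (-k) := by rw [hC, ← zpow_neg]
  constructor
  · rintro ⟨hdy, -, hm, hmax⟩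
    refine ⟨isDyadic_scale hCpos hC hdy, Set.subset_univ _, ?_, ?_⟩
    · rw [mass_scale hCpos h hcont, hε']
      exact mul_le_mul_of_nonneg_left hm hκ.le
    · rintro T hTdy hsub -
      set S₀ := T.scale C⁻¹ (inv_pos.2 hCpos) with hS₀
      have hT : T = S₀.scale C hCpos := (scale_inv_scale hCpos T).symm
      have hS₀dy : S₀.IsDyadic := isDyadic_scale (inv_pos.2 hCpos) hCinv hTdy
      rw [hT] at hsub
      have hss : S.toSet ⊂ S₀.toSet := (scale_ssubset_iff hCpos S S₀).1 hsub
      have := hmax S₀ hS₀dy hss (Set.subset_univ _)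
      rw [hT, mass_scale hCpos h hcont, hε']
      exact (mul_lt_mul_iff_right₀ hκ).2 this
  · rintro ⟨hdy', -, hm', hmax'⟩
    have hdy : S.IsDyadic := by
      have := isDyadic_scale (inv_pos.2 hCpos) hCinv hdy'
      rwa [scale_scale_inv hCpos S] at this
    refine ⟨hdy, Set.subset_univ _, ?_, ?_⟩
    · rw [mass_scale hCpos h hcont, hε'] at hm'
      exact le_of_mul_le_mul_left hm' hκ
    · rintro T hTdy hss -
      have := hmax' (T.scale C hCpos) (isDyadic_scale hCpos hC hTdy)
        ((scale_ssubset_iff hCpos S T).2 hss) (Set.subset_univ _)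
      rw [mass_scale hCpos h hcont, hε'] at this
      exact (mul_lt_mul_iff_right₀ hκ).1 this

lemma hasChain_iff {k : ℤ} (hCpos : 0 < C) (hC : C = 2 ^ k)
    (h : ℂ → ℝ) (hcont : Continuous h) (Q a ε ε' : ℝ)
    (hε' : ε' = C ^ Q * Real.exp (-a) * ε) (z w : ℂ) (n : ℕ) :
    HasChain (fun u => h (u / (C : ℂ)) - a) Q ε' Set.univ ((C : ℂ) * z) ((C : ℂ) * w) n ↔
      HasChain h Q ε Set.univ z w n := by
  have hC0 : (C : ℂ) ≠ 0 := by exact_mod_cast hCpos.ne'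
  have hinj : Function.Injective (fun u : ℂ => (C : ℂ) * u) := mul_right_injective₀ hC0
  constructor
  · rintro ⟨T, hT, hz, hw, hadj⟩
    refine ⟨fun j => (T j).scale C⁻¹ (inv_pos.2 hCpos), fun j hj => ?_, ?_, ?_, ?_⟩
    · rw [tiling_iff hCpos hC h hcont Q a ε ε' hε', scale_inv_scale hCpos]
      exact hT j hj
    · rw [← mem_scale_iff hCpos _ z, scale_inv_scale hCpos]
      exact hz
    · rw [← mem_scale_iff hCpos _ w, scale_inv_scale hCpos]
      exact hw
    · intro j hj1 hjn
      obtain ⟨x, ⟨hx1, hx2⟩, y, ⟨hy1, hy2⟩, hxy⟩ := hadj j hj1 hjn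
      have hmem : ∀ (m : ℕ) (u : ℂ), u ∈ (T m).toSet →
          u / (C : ℂ) ∈ ((T m).scale C⁻¹ (inv_pos.2 hCpos)).toSet := by
        intro m u hu
        rw [← mem_scale_iff hCpos _ (u / (C : ℂ)), scale_inv_scale hCpos,
          mul_div_cancel₀ _ hC0]
        exact hu
      exact ⟨x / C, ⟨hmem _ _ hx1, hmem _ _ hx2⟩, y / C, ⟨hmem _ _ hy1, hmem _ _ hy2⟩,
        fun hc => hxy (by field_simp at hc; exact hc)⟩
  · rintro ⟨S, hS, hz, hw, hadj⟩
    refine ⟨fun j => (S j).scale C hCpos, fun j hj => ?_, ?_, ?_, ?_⟩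
    · exact (tiling_iff hCpos hC h hcont Q a ε ε' hε' (S j)).1 (hS j hj)
    · exact (mem_scale_iff hCpos _ z).2 hz
    · exact (mem_scale_iff hCpos _ w).2 hw
    · intro j hj1 hjn
      obtain ⟨x, ⟨hx1, hx2⟩, y, ⟨hy1, hy2⟩, hxy⟩ := hadj j hj1 hjn
      exact ⟨(C : ℂ) * x, ⟨(mem_scale_iff hCpos _ x).2 hx1, (mem_scale_iff hCpos _ x).2 hx2⟩,
        (C : ℂ) * y, ⟨(mem_scale_iff hCpos _ y).2 hy1, (mem_scale_iff hCpos _ y).2 hy2⟩,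
        fun hc => hxy (hinj hc)⟩

end ScalingAux

/-- The exact scaling relation (6.2): for `g = h(·/C) - a` with `C = 2^k` dyadic and
`ε' = C^Q e^{-a} ε`, a dyadic square `S` belongs to `𝒮_h^ε(ℂ)` iff `CS` belongs to
`𝒮_g^{ε'}(ℂ)`; consequently `D_g^{ε'}(Cz, Cw) = D_h^ε(z, w)` for all `z, w`. -/
theorem tiling_exact_scaling
    (Q : ℝ) (hQ : 0 < Q) (h : ℂ → ℝ) (hcont : Continuous h)
    (ε : ℝ) (hε : 0 < ε) (k : ℤ) (C : ℝ) (hC : C = 2 ^ k) (hCpos : 0 < C) (a : ℝ)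
    (ε' : ℝ) (hε' : ε' = C ^ Q * Real.exp (-a) * ε) :
    (∀ S : DySquare,
        S ∈ Tiling h Q ε Set.univ ↔
          S.scale C hCpos ∈ Tiling (fun u => h (u / (C : ℂ)) - a) Q ε' Set.univ) ∧
    (∀ z w : ℂ,
        GDist (fun u => h (u / (C : ℂ)) - a) Q ε' Set.univ ((C : ℂ) * z) ((C : ℂ) * w) =
          GDist h Q ε Set.univ z w) := by
  refine ⟨fun S => ScalingAux.tiling_iff hCpos hC h hcont Q a ε ε' hε' S, fun z w => ?_⟩
  unfold GDist
  congr 1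
  ext n
  simp only [Set.mem_setOf_eq]
  constructor
  · rintro ⟨m, rfl, hm⟩
    exact ⟨m, rfl, (ScalingAux.hasChain_iff hCpos hC h hcont Q a ε ε' hε' z w m).1 hm⟩
  · rintro ⟨m, rfl, hm⟩
    exact ⟨m, rfl, (ScalingAux.hasChain_iff hCpos hC h hcont Q a ε ε' hε' z w m).2 hm⟩

end
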